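/- If f : X → Y is an étale morphism of schemes of finite type over k, then for every m ≥ 0 the commutative square formed by f_m : J_m(X) → J_m(Y), the projections π_m^X : J_m(X) → X, π_m^Y : J_m(Y) → Y, and f is Cartesian; i.e. J_m(X) ≅ X ×_Y J_m(Y). -/

import Mathlib

open Polynomial

universe u

/-- The truncated polynomial ring `A[t]/(t^{m+1})`. -/
noncomputable abbrev TruncPoly (A : Type*) [CommRing A] (m : ℕ) : Type _ :=
  Polynomial A ⧸ (Ideal.span {(Polynomial.X : Polynomial A) ^ (m + 1)})

/-- Truncation `A[t]/(t^{m+1}) → A[t]/(t^{p+1})` for `p ≤ m`. -/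
noncomputable def truncTrunc (k : Type*) (A : Type*) [CommSemiring k] [CommRing A] [Algebra k A]
    {m p : ℕ} (h : p ≤ m) : TruncPoly A m →ₐ[k] TruncPoly A p :=
  Ideal.Quotient.liftₐ _ (Ideal.Quotient.mkₐ k _) (fun a ha => by
    rw [Ideal.Quotient.mkₐ_eq_mk, Ideal.Quotient.eq_zero_iff_mem]
    exact Ideal.span_singleton_le_span_singleton.2
      (pow_dvd_pow _ (by omega)) ha)

/-- Evaluation at `t = 0`, i.e. the constant term `A[t]/(t^{m+1}) → A`. -/
noncomputable def truncEv0 (k : Type*) (A : Type*) [CommSemiring k] [CommRing A] [Algebra k A]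
    (m : ℕ) : TruncPoly A m →ₐ[k] A :=
  Ideal.Quotient.liftₐ _ ((Polynomial.aeval (0 : A)).restrictScalars k) (fun a ha => by
    obtain ⟨c, rfl⟩ := Ideal.mem_span_singleton.1 ha
    simp)

universe v

/-- Universe-polymorphic square-zero lifting for formally smooth finite-type algebras. -/
theorem aux_exists_lift_sq {R S : Type u} [CommRing R] [CommRing S] [Algebra R S]
    [Algebra.FormallySmooth R S] [Algebra.FiniteType R S]
    {B : Type v} [CommRing B] [Algebra R B] (I : Ideal B) (hI : I ^ 2 = ⊥)
    (f : S →ₐ[R] B ⧸ I) : ∃ g : S →ₐ[R] B, (Ideal.Quotient.mkₐ R I).comp g = f := by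
  obtain ⟨n, _, q, hq⟩ :=
    Algebra.FiniteType.iff_quotient_mvPolynomial'.mp ‹Algebra.FiniteType R S›
  set P := MvPolynomial n R
  choose b hb using fun i : n => Ideal.Quotient.mk_surjective (f (q (MvPolynomial.X i)))
  let h : P →ₐ[R] B := MvPolynomial.aeval b
  have hh : (Ideal.Quotient.mkₐ R I).comp h = f.comp q := by
    apply MvPolynomial.algHom_ext
    intro i
    simp [h, hb]
  set K : Ideal P := RingHom.ker (h : P →+* B) with hK
  let ι : (P ⧸ K) →ₐ[R] B := Ideal.Quotient.liftₐ K h (fun a ha => ha)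
  have hι : ∀ p : P, ι (Ideal.Quotient.mk K p) = h p := fun p => by
    rfl
  have hinj : Function.Injective ι := by
    rw [injective_iff_map_eq_zero]
    intro a ha
    obtain ⟨p, rfl⟩ := Ideal.Quotient.mk_surjective a
    rw [hι] at ha
    rwa [Ideal.Quotient.eq_zero_iff_mem]
  set I₀ : Ideal (P ⧸ K) := I.comap (ι : (P ⧸ K) →+* B) with hI₀def
  have hI₀ : I₀ ^ 2 = ⊥ := by
    rw [pow_two, eq_bot_iff]
    refine Ideal.mul_le.mpr fun x hx y hy => ?_
    rw [Ideal.mem_bot]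
    apply hinj
    rw [map_mul, map_zero]
    rw [← Ideal.mem_bot, ← hI, pow_two]
    exact Ideal.mul_mem_mul hx hy
  have hN : ∀ p ∈ RingHom.ker (q : P →+* S),
      ((Ideal.Quotient.mkₐ R I₀).comp (Ideal.Quotient.mkₐ R K)) p = 0 := by
    intro p hp
    have h0 : q p = 0 := by rwa [RingHom.mem_ker] at hp
    have : f (q p) = 0 := by rw [h0, map_zero]
    rw [← AlgHom.comp_apply, ← hh] at this
    simp only [AlgHom.comp_apply, Ideal.Quotient.mkₐ_eq_mk] at this ⊢
    rw [Ideal.Quotient.eq_zero_iff_mem] at this ⊢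
    rw [hI₀def, Ideal.mem_comap]
    show ι (Ideal.Quotient.mk K p) ∈ I
    rw [hι]
    exact this
  let e : (P ⧸ RingHom.ker (q : P →+* S)) ≃ₐ[R] S := Ideal.quotientKerAlgEquivOfSurjective hq
  let f₀ : S →ₐ[R] (P ⧸ K) ⧸ I₀ :=
    (Ideal.Quotient.liftₐ _ ((Ideal.Quotient.mkₐ R I₀).comp (Ideal.Quotient.mkₐ R K)) hN).comp
      e.symm.toAlgHom
  have hf₀ : ∀ p : P, f₀ (q p) = Ideal.Quotient.mk I₀ (Ideal.Quotient.mk K p) := by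
    intro p
    have he : e (Ideal.Quotient.mk _ p) = q p := rfl
    have : e.symm (q p) = Ideal.Quotient.mk _ p := by rw [← he, AlgEquiv.symm_apply_apply]
    simp only [f₀, AlgHom.comp_apply, AlgEquiv.toAlgHom_eq_coe, AlgEquiv.coe_algHom]
    rw [this]
    rw [Ideal.Quotient.liftₐ_apply]
    rfl
  obtain ⟨g₀, hg₀⟩ := Algebra.FormallySmooth.comp_surjective R S I₀ hI₀ f₀
  refine ⟨ι.comp g₀, AlgHom.ext fun s => ?_⟩
  obtain ⟨p, rfl⟩ := hq s
  calc ((Ideal.Quotient.mkₐ R I).comp (ι.comp g₀)) (q p)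
      = Ideal.quotientMapₐ I ι le_rfl (Ideal.Quotient.mk I₀ (g₀ (q p))) := rfl
    _ = Ideal.quotientMapₐ I ι le_rfl (f₀ (q p)) := by
        rw [show Ideal.Quotient.mk I₀ (g₀ (q p)) = f₀ (q p) from
          congrArg (fun t => t (q p)) hg₀]
    _ = f (q p) := by
        rw [hf₀]
        have : Ideal.quotientMapₐ I ι le_rfl (Ideal.Quotient.mk I₀ (Ideal.Quotient.mk K p))
            = Ideal.Quotient.mk I (ι (Ideal.Quotient.mk K p)) := rfl
        rw [this, hι, ← Ideal.Quotient.mkₐ_eq_mk R, ← AlgHom.comp_apply, hh]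
        rfl

/-- Universe-polymorphic nilpotent lifting for formally smooth finite-type algebras. -/
theorem aux_exists_lift {R S : Type u} [CommRing R] [CommRing S] [Algebra R S]
    [Algebra.FormallySmooth R S] [Algebra.FiniteType R S]
    {B : Type v} [CommRing B] [_RB : Algebra R B] (I : Ideal B) (hI : IsNilpotent I)
    (g : S →ₐ[R] B ⧸ I) : ∃ f : S →ₐ[R] B, (Ideal.Quotient.mkₐ R I).comp f = g := by
  revert g
  change Function.Surjective (Ideal.Quotient.mkₐ R I).comp
  revert _RB
  apply Ideal.IsNilpotent.induction_on (S := B) I hI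
  · intro B _ I hI _ f
    exact aux_exists_lift_sq I hI f
  · intro B _ I J hIJ h₁ h₂ _ g
    let this : ((B ⧸ I) ⧸ J.map (Ideal.Quotient.mk I)) ≃ₐ[R] B ⧸ J :=
      {
        (DoubleQuot.quotQuotEquivQuotSup I J).trans
          (Ideal.quotEquivOfEq (sup_eq_right.mpr hIJ)) with
        commutes' := fun x => rfl }
    obtain ⟨g', e⟩ := h₂ (this.symm.toAlgHom.comp g)
    obtain ⟨g', rfl⟩ := h₁ g'
    replace e := congr_arg this.toAlgHom.comp e
    conv_rhs at e =>
      rw [← AlgHom.comp_assoc, AlgEquiv.toAlgHom_eq_coe, AlgEquiv.toAlgHom_eq_coe,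
        AlgEquiv.comp_symm, AlgHom.id_comp]
    exact ⟨g', e⟩

theorem truncEv0_mk (k : Type*) (A : Type*) [CommSemiring k] [CommRing A] [Algebra k A]
    (m : ℕ) (p : Polynomial A) :
    truncEv0 k A m (Ideal.Quotient.mk _ p) = Polynomial.aeval (0 : A) p := by
  simp [truncEv0]

theorem truncEv0_ker_pow (k : Type*) (A : Type*) [CommSemiring k] [CommRing A] [Algebra k A]
    (m : ℕ) :
    RingHom.ker ((truncEv0 k A m) : TruncPoly A m →+* A) ^ (m + 1) = ⊥ := by
  rw [eq_bot_iff]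
  have h1 : RingHom.ker ((truncEv0 k A m) : TruncPoly A m →+* A)
      ≤ Ideal.span {Ideal.Quotient.mk _ (Polynomial.X : Polynomial A)} := by
    intro x hx
    obtain ⟨p, rfl⟩ := Ideal.Quotient.mk_surjective x
    rw [RingHom.mem_ker] at hx
    have hx' : Polynomial.aeval (0 : A) p = 0 := by
      rw [← truncEv0_mk k A m p]; exact hx
    have hc : p.coeff 0 = 0 := by
      rwa [Polynomial.aeval_def, Polynomial.eval₂_at_zero, Algebra.algebraMap_self_apply] at hx'
    obtain ⟨c, rfl⟩ := Polynomial.X_dvd_iff.mpr hc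
    rw [map_mul]
    exact Ideal.mul_mem_right _ _ (Ideal.subset_span rfl)
  refine le_trans (Ideal.pow_right_mono h1 (m + 1)) ?_
  have h0 : (Ideal.Quotient.mk _ ((Polynomial.X : Polynomial A) ^ (m + 1)) : TruncPoly A m) = 0 :=
    Ideal.Quotient.eq_zero_iff_mem.mpr (Ideal.subset_span rfl)
  rw [Ideal.span_singleton_pow, ← map_pow, h0]
  simp

/-- If `f : X → Y` is an étale morphism of schemes of finite type over `k`
(affinely: `Y = Spec R`, `X = Spec S` with `R → S` étale), then for every `m ≥ 0` the square
`J_m(X) → J_m(Y)`, `J_m(X) → X`, `J_m(Y) → Y` is Cartesian, i.e. `J_m(X) ≅ X ×_Y J_m(Y)`: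
on `A`-points, `m`-jets of `X` correspond bijectively to pairs consisting of an `A`-point of
`X` and an `m`-jet of `Y` agreeing in `Y(A)`. -/
theorem statement_5 (k : Type*) (R S : Type u) [Field k] [CommRing R] [CommRing S] [Algebra k R]
    [Algebra k S] [Algebra R S] [IsScalarTower k R S] [Algebra.FiniteType k R]
    [Algebra.FiniteType k S] [Algebra.Etale R S] (m : ℕ)
    (A : Type*) [CommRing A] [Algebra k A] :
    Function.Bijective
      (fun g : S →ₐ[k] TruncPoly A m =>
        (⟨((truncEv0 k A m).comp g, g.comp (IsScalarTower.toAlgHom k R S)),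
          rfl⟩ :
          {p : (S →ₐ[k] A) × (R →ₐ[k] TruncPoly A m) //
            p.1.comp (IsScalarTower.toAlgHom k R S) = (truncEv0 k A m).comp p.2})) := by
  have hker : IsNilpotent (RingHom.ker ((truncEv0 k A m) : TruncPoly A m →+* A)) :=
    ⟨m + 1, truncEv0_ker_pow k A m⟩
  constructor
  · intro g₁ g₂ hg
    have h1 : (truncEv0 k A m).comp g₁ = (truncEv0 k A m).comp g₂ :=
      congrArg (fun p => p.val.1) hg
    have h2 : g₁.comp (IsScalarTower.toAlgHom k R S)
        = g₂.comp (IsScalarTower.toAlgHom k R S) := congrArg (fun p => p.val.2) hg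
    letI : Algebra R (TruncPoly A m) :=
      ((g₁.comp (IsScalarTower.toAlgHom k R S)).toRingHom).toAlgebra
    let g₁' : S →ₐ[R] TruncPoly A m := { g₁.toRingHom with commutes' := fun r => rfl }
    let g₂' : S →ₐ[R] TruncPoly A m :=
      { g₂.toRingHom with commutes' := fun r => (AlgHom.congr_fun h2 r).symm }
    have : g₁' = g₂' :=
      Algebra.FormallyUnramified.ext' ((truncEv0 k A m) : TruncPoly A m →+* A) hker g₁' g₂'
        (fun x => AlgHom.congr_fun h1 x)
    exact AlgHom.ext fun x => congrArg (fun t => t x) this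
  · rintro ⟨⟨φ, ψ⟩, hc⟩
    letI : Algebra R (TruncPoly A m) := ψ.toRingHom.toAlgebra
    letI : Algebra R A := ((φ.comp (IsScalarTower.toAlgHom k R S)).toRingHom).toAlgebra
    let ev : TruncPoly A m →ₐ[R] A :=
      { (truncEv0 k A m).toRingHom with commutes' := fun r => (AlgHom.congr_fun hc r).symm }
    have hevsurj : Function.Surjective ev := fun a =>
      ⟨Ideal.Quotient.mk _ (Polynomial.C a), by
        show truncEv0 k A m _ = a
        rw [truncEv0_mk]; simp⟩
    let φ' : S →ₐ[R] A := { φ.toRingHom with commutes' := fun r => rfl }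
    haveI : Algebra.FiniteType R S := Algebra.FiniteType.of_finitePresentation
    let e2 := Ideal.quotientKerAlgEquivOfSurjective (f := ev) hevsurj
    obtain ⟨g, hg⟩ := aux_exists_lift (RingHom.ker (ev : TruncPoly A m →+* A)) hker
      (e2.symm.toAlgHom.comp φ')
    have key : ∀ x : S, ev (g x) = φ x := by
      intro x
      have h3 : Ideal.Quotient.mk (RingHom.ker (ev : TruncPoly A m →+* A)) (g x)
          = e2.symm (φ' x) := AlgHom.congr_fun hg x
      have h4 : e2 (Ideal.Quotient.mk (RingHom.ker (ev : TruncPoly A m →+* A)) (g x)) = ev (g x) :=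
        rfl
      rw [h3, AlgEquiv.apply_symm_apply] at h4
      exact h4.symm
    let gk : S →ₐ[k] TruncPoly A m :=
      { g.toRingHom with
        commutes' := fun x => by
          show g (algebraMap k S x) = algebraMap k (TruncPoly A m) x
          rw [IsScalarTower.algebraMap_apply k R S, g.commutes]
          exact ψ.commutes x }
    refine ⟨gk, Subtype.ext (Prod.ext ?_ ?_)⟩
    · exact AlgHom.ext fun x => key x
    · exact AlgHom.ext fun r => g.commutes r
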